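/- Let G = (V,E) be the directed spanner instance built from a projection games instance in which every vertex of L has degree exactly K ≥ 1, with parameter k ≥ 2, let y* be a feasible solution to SDP_Proj^{r+2} (r ≥ 0), and let y' be built from y*. Then for every edge (u,v) ∈ E_LStars ∪ E_M ∪ E_RStars and every z ∈ Z^{u,v} with respect to stretch t = 2k−1, the slack moment matrix with (I,J) entry ∑_{e∈E} z(e)·y'_{I∪J∪{e}} − y'_{I∪J}, indexed by subsets I, J ⊆ E with |I|, |J| ≤ r, is positive semidefinite. -/

import Mathlib

open Finset

/-- A set of (vertex, label) pairs is *inconsistent* if it assigns two different labels to the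
same vertex. -/
def Inconsistent {W Sg : Type*} (Ψ : Finset (W × Sg)) : Prop :=
  ∃ v σ σ', σ ≠ σ' ∧ (v, σ) ∈ Ψ ∧ (v, σ') ∈ Ψ

/-- Feasibility for the level-`r` Lasserre SDP for projection games (`SDP_Proj^r`) on the
vertex set `W` (`= L ⊕ R`) with alphabet `Sg`: `y ∅ = 1`, the moment matrix
`(y_{Ψ₁ ∪ Ψ₂})_{|Ψ₁|,|Ψ₂| ≤ r}` is positive semidefinite, and for every vertex `v` and all
`Ψ₁, Ψ₂` with `|Ψ₁|, |Ψ₂| ≤ r` one has `∑_{σ} y_{Ψ₁∪Ψ₂∪{(v,σ)}} = y_{Ψ₁∪Ψ₂}`. -/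
def ProjFeasible {W Sg : Type*} [Fintype W] [Fintype Sg] [DecidableEq W] [DecidableEq Sg]
    (r : ℕ) (y : Finset (W × Sg) → ℝ) : Prop :=
  y ∅ = 1 ∧
  (Matrix.of fun Ψ₁ Ψ₂ : {S : Finset (W × Sg) // S.card ≤ r} => y (Ψ₁.1 ∪ Ψ₂.1)).PosSemidef ∧
  ∀ (v : W) (Ψ₁ Ψ₂ : Finset (W × Sg)), Ψ₁.card ≤ r → Ψ₂.card ≤ r →
    ∑ σ : Sg, y ((Ψ₁ ∪ Ψ₂) ∪ {(v, σ)}) = y (Ψ₁ ∪ Ψ₂)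

/-- A directed path in the graph with edge set `E`, from `u` to `v`, given as its (nonempty)
list of edges: consecutive edges are incident, the first edge starts at `u`, the last edge ends
at `v`, and no vertex is visited twice. -/
def IsDirPath {V : Type*} [DecidableEq V] (E : Finset (V × V)) (u v : V)
    (p : List (V × V)) : Prop :=
  p ≠ [] ∧ (∀ e ∈ p, e ∈ E) ∧ Option.map Prod.fst p.head? = some u ∧
    Option.map Prod.snd p.getLast? = some v ∧
    List.Chain' (fun e f => e.2 = f.1) p ∧ (u :: p.map Prod.snd).Nodup

/-- `z ∈ Z^{u,v}` (with respect to stretch `t`): a fractional cut against the stretch-`t`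
paths from `u` to `v`, i.e. `z : E → [0,1]` with `∑_{e ∈ P} z e ≥ 1` for every path
`P ∈ 𝒫_{u,v}` (at most `t` edges). -/
def InZ {V : Type*} [DecidableEq V] (E : Finset (V × V)) (t : ℕ) (u v : V)
    (z : V × V → ℝ) : Prop :=
  (∀ e ∈ E, 0 ≤ z e ∧ z e ≤ 1) ∧
  ∀ p : List (V × V), IsDirPath E u v p → p.length ≤ t → 1 ≤ (p.map z).sum

/-- A `t`-spanner of the directed graph with edge set `E`: a subset `S ⊆ E` such that every
edge `(u,v) ∈ E` is spanned by a directed path from `u` to `v` of at most `t` edges,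
all belonging to `S`. -/
def IsSpanner {V : Type*} [DecidableEq V] (E S : Finset (V × V)) (t : ℕ) : Prop :=
  S ⊆ E ∧ ∀ e ∈ E, ∃ p : List (V × V), IsDirPath S e.1 e.2 p ∧ p.length ≤ t

/-- The moment matrix `(y_{I ∪ J})`, indexed by the subsets `I, J ⊆ E` with `|I|, |J| ≤ r`. -/
def momentMatrixE {α : Type*} [Fintype α] [DecidableEq α] (E : Finset α) (r : ℕ)
    (y : Finset α → ℝ) :
    Matrix {S : Finset α // S ⊆ E ∧ S.card ≤ r} {S : Finset α // S ⊆ E ∧ S.card ≤ r} ℝ :=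
  Matrix.of fun I J => y (I.1 ∪ J.1)

/-- The slack moment matrix `(∑_{e ∈ E} z e · y_{I∪J∪{e}} − y_{I∪J})`, indexed by the subsets
`I, J ⊆ E` with `|I|, |J| ≤ r`. -/
def slackMatrixE {α : Type*} [Fintype α] [DecidableEq α] (E : Finset α) (r : ℕ)
    (y : Finset α → ℝ) (z : α → ℝ) :
    Matrix {S : Finset α // S ⊆ E ∧ S.card ≤ r} {S : Finset α // S ⊆ E ∧ S.card ≤ r} ℝ :=
  Matrix.of fun I J => (∑ e ∈ E, z e * y (insert e (I.1 ∪ J.1))) - y (I.1 ∪ J.1)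

/-- The ambient vertex type for the directed `(2k−1)`-spanner instance built from a projection
games instance with left vertices `L`, right vertices `R` and alphabet `Sg`; `D` is the number
of duplicate vertices (`D = k·K·|Σ|`) and `T` the number of internal vertices of each middle
path (`T = 2k−4`).  The five summands are: the label vertices `c_{i,σ}`, the duplicate vertices
`c_i^l`, the label vertices `x_{j,σ}`, the duplicate vertices `x_j^l`, and the middle-path
vertices `w_{i,j,σL,σR,t}`. -/
abbrev SpV (L R Sg : Type) (D T : ℕ) : Type :=
  (L × Sg) ⊕ (L × Fin D) ⊕ (R × Sg) ⊕ (R × Fin D) ⊕ (L × R × Sg × Sg × Fin T)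

namespace SpV

variable {L R Sg : Type} {D T : ℕ}

/-- The label vertex `c_{i,σ}`. -/
def cLab (i : L) (σ : Sg) : SpV L R Sg D T := Sum.inl (i, σ)

/-- The duplicate vertex `c_i^l`. -/
def cDup (i : L) (l : Fin D) : SpV L R Sg D T := Sum.inr (Sum.inl (i, l))

/-- The label vertex `x_{j,σ}`. -/
def xLab (j : R) (σ : Sg) : SpV L R Sg D T := Sum.inr (Sum.inr (Sum.inl (j, σ)))

/-- The duplicate vertex `x_j^l`. -/
def xDup (j : R) (l : Fin D) : SpV L R Sg D T :=
  Sum.inr (Sum.inr (Sum.inr (Sum.inl (j, l))))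

/-- The middle-path vertex `w_{i,j,σL,σR,t}`. -/
def mid (i : L) (j : R) (σL σR : Sg) (t : Fin T) : SpV L R Sg D T :=
  Sum.inr (Sum.inr (Sum.inr (Sum.inr (i, j, σL, σR, t))))

end SpV

set_option synthInstance.maxSize 1024 in
instance SpV.instDecidableEq {L R Sg : Type} [DecidableEq L] [DecidableEq R] [DecidableEq Sg]
    {D T : ℕ} : DecidableEq (SpV L R Sg D T) := inferInstance

instance SpV.instFintype {L R Sg : Type} [Fintype L] [Fintype R] [Fintype Sg] {D T : ℕ} :
    Fintype (SpV L R Sg D T) := inferInstance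

namespace Spanner

/-- The number `k·K·|Σ|` of duplicate vertices per projection-games vertex. -/
abbrev numDup (Sg : Type) [Fintype Sg] (k K : ℕ) : ℕ := k * K * Fintype.card Sg

/-- The vertex type of the directed spanner instance with parameters `k, K`. -/
abbrev Vt (L R Sg : Type) [Fintype Sg] (k K : ℕ) : Type :=
  SpV L R Sg (numDup Sg k K) (2 * k - 4)

/-- The edge set `E_L = {(c_i^l, c_{i,σ})}`. -/
def ELedges (L R Sg : Type) [Fintype L] [Fintype R] [Fintype Sg]
    [DecidableEq L] [DecidableEq R] [DecidableEq Sg] (k K : ℕ) :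
    Finset (Vt L R Sg k K × Vt L R Sg k K) :=
  Finset.univ.image fun p : L × Fin (numDup Sg k K) × Sg =>
    (SpV.cDup p.1 p.2.1, SpV.cLab p.1 p.2.2)

/-- The edge set `E_R = {(x_{j,σ}, x_j^l)}`. -/
def ERedges (L R Sg : Type) [Fintype L] [Fintype R] [Fintype Sg]
    [DecidableEq L] [DecidableEq R] [DecidableEq Sg] (k K : ℕ) :
    Finset (Vt L R Sg k K × Vt L R Sg k K) :=
  Finset.univ.image fun p : R × Fin (numDup Sg k K) × Sg =>
    (SpV.xLab p.1 p.2.2, SpV.xDup p.1 p.2.1)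

/-- The edge set `E_LStars = {(c_{i,1}, c_{i,σ}), (c_{i,σ}, c_{i,1}) : σ ≠ 1}`
(`σ0` plays the role of the fixed label `1 ∈ Σ`). -/
def ELStars (L R : Type) {Sg : Type} [Fintype L] [Fintype R] [Fintype Sg]
    [DecidableEq L] [DecidableEq R] [DecidableEq Sg] (σ0 : Sg) (k K : ℕ) :
    Finset (Vt L R Sg k K × Vt L R Sg k K) :=
  ((Finset.univ.filter fun p : L × Sg => p.2 ≠ σ0).image fun p =>
      (SpV.cLab p.1 σ0, SpV.cLab p.1 p.2)) ∪
  ((Finset.univ.filter fun p : L × Sg => p.2 ≠ σ0).image fun p =>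
      (SpV.cLab p.1 p.2, SpV.cLab p.1 σ0))

/-- The edge set `E_RStars = {(x_{j,1}, x_{j,σ}), (x_{j,σ}, x_{j,1}) : σ ≠ 1}`. -/
def ERStars (L R : Type) {Sg : Type} [Fintype L] [Fintype R] [Fintype Sg]
    [DecidableEq L] [DecidableEq R] [DecidableEq Sg] (σ0 : Sg) (k K : ℕ) :
    Finset (Vt L R Sg k K × Vt L R Sg k K) :=
  ((Finset.univ.filter fun p : R × Sg => p.2 ≠ σ0).image fun p =>
      (SpV.xLab p.1 σ0, SpV.xLab p.1 p.2)) ∪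
  ((Finset.univ.filter fun p : R × Sg => p.2 ≠ σ0).image fun p =>
      (SpV.xLab p.1 p.2, SpV.xLab p.1 σ0))

/-- The edge set `E_Outer = {(c_i^l, x_j^l) : {c_i, x_j} ∈ E_Proj, l ∈ [kK|Σ|]}`. -/
def EOuter {L R : Type} (Sg : Type) [Fintype L] [Fintype R] [Fintype Sg]
    [DecidableEq L] [DecidableEq R] [DecidableEq Sg]
    (Eproj : Finset (L × R)) (k K : ℕ) :
    Finset (Vt L R Sg k K × Vt L R Sg k K) :=
  (Eproj ×ˢ (Finset.univ : Finset (Fin (numDup Sg k K)))).image fun p =>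
    (SpV.cDup p.1.1 p.2, SpV.xDup p.1.2 p.2)

/-- The vertex sequence `c_{i,σL}, w_{i,j,σL,σR,1}, …, w_{i,j,σL,σR,2k−4}, x_{j,σR}` of the
middle path (for `k = 2` it is just `c_{i,σL}, x_{j,σR}`). -/
def midVerts {L R Sg : Type} [Fintype Sg] (k K : ℕ) (i : L) (j : R) (σL σR : Sg) :
    List (Vt L R Sg k K) :=
  (SpV.cLab i σL :: (List.finRange (2 * k - 4)).map fun t => SpV.mid i j σL σR t) ++
    [SpV.xLab j σR]

/-- The list of consecutive edges of a vertex sequence. -/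
def pathEdges {V : Type*} (vs : List V) : List (V × V) := vs.zip vs.tail

/-- The edge list `E_M^{i,j,σL,σR}` of the middle path from `c_{i,σL}` to `x_{j,σR}`. -/
def EMpath {L R Sg : Type} [Fintype Sg] (k K : ℕ) (i : L) (j : R) (σL σR : Sg) :
    List (Vt L R Sg k K × Vt L R Sg k K) :=
  pathEdges (midVerts k K i j σL σR)

/-- The edge set `E_M = ⋃_{ {c_i,x_j} ∈ E_Proj, (σL,σR) ∈ π_{i,j} } E_M^{i,j,σL,σR}`. -/
def EMedges {L R Sg : Type} [Fintype L] [Fintype R] [Fintype Sg]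
    [DecidableEq L] [DecidableEq R] [DecidableEq Sg]
    (Eproj : Finset (L × R)) (π : L → R → Sg → Sg) (k K : ℕ) :
    Finset (Vt L R Sg k K × Vt L R Sg k K) :=
  Eproj.biUnion fun e => (Finset.univ : Finset Sg).biUnion fun σL =>
    (EMpath k K e.1 e.2 σL (π e.1 e.2 σL)).toFinset

/-- The edge set `E = E_L ∪ E_LStars ∪ E_M ∪ E_RStars ∪ E_R ∪ E_Outer` of the directed
spanner instance. -/
def Edges {L R Sg : Type} [Fintype L] [Fintype R] [Fintype Sg]
    [DecidableEq L] [DecidableEq R] [DecidableEq Sg]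
    (Eproj : Finset (L × R)) (π : L → R → Sg → Sg) (σ0 : Sg) (k K : ℕ) :
    Finset (Vt L R Sg k K × Vt L R Sg k K) :=
  ELedges L R Sg k K ∪ ELStars L R σ0 k K ∪ EMedges Eproj π k K ∪
    ERStars L R σ0 k K ∪ ERedges L R Sg k K ∪ EOuter Sg Eproj k K

/-- The vertex set `V = L_Labels ∪ L_Dups ∪ R_Labels ∪ R_Dups ∪ M_Paths` of the directed
spanner instance. -/
def Verts {L R Sg : Type} [Fintype L] [Fintype R] [Fintype Sg]
    [DecidableEq L] [DecidableEq R] [DecidableEq Sg]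
    (Eproj : Finset (L × R)) (π : L → R → Sg → Sg) (k K : ℕ) :
    Finset (Vt L R Sg k K) :=
  (Finset.univ.image fun p : L × Sg => SpV.cLab p.1 p.2) ∪
  (Finset.univ.image fun p : L × Fin (numDup Sg k K) => SpV.cDup p.1 p.2) ∪
  (Finset.univ.image fun p : R × Sg => SpV.xLab p.1 p.2) ∪
  (Finset.univ.image fun p : R × Fin (numDup Sg k K) => SpV.xDup p.1 p.2) ∪
  (Eproj.biUnion fun e => (Finset.univ : Finset Sg).biUnion fun σL =>
    Finset.univ.image fun t : Fin (2 * k - 4) =>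
      SpV.mid e.1 e.2 σL (π e.1 e.2 σL) t)

/-- The map `Φ` sending an edge of `E ∖ E_Outer` to the corresponding label set:
`Φ((c_i^l, c_{i,σ})) = {(c_i, σ)}`, `Φ((x_{j,σ}, x_j^l)) = {(x_j, σ)}`, and `Φ(e) = ∅` for
`e ∈ E_LStars ∪ E_M ∪ E_RStars`. -/
def Phi {L R Sg : Type} [Fintype Sg] {k K : ℕ}
    (e : Vt L R Sg k K × Vt L R Sg k K) : Finset ((L ⊕ R) × Sg) :=
  match e with
  | (Sum.inr (Sum.inl _), Sum.inl (i, σ)) => {(Sum.inl i, σ)}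
  | (Sum.inr (Sum.inr (Sum.inl (j, σ))), Sum.inr (Sum.inr (Sum.inr (Sum.inl _)))) =>
      {(Sum.inr j, σ)}
  | _ => ∅

/-- The fractional solution `y'` built from a solution `y*` of the projection games SDP:
`y'_S = 0` if `S` contains an edge of `E_Outer`, and `y'_S = y*_{Φ(S)}` otherwise
(where `Φ(S) = ⋃_{e ∈ S} Φ(e)`). -/
def yPrime {L R Sg : Type} [Fintype L] [Fintype R] [Fintype Sg]
    [DecidableEq L] [DecidableEq R] [DecidableEq Sg]
    (Eproj : Finset (L × R)) (k K : ℕ) (ystar : Finset ((L ⊕ R) × Sg) → ℝ)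
    (S : Finset (Vt L R Sg k K × Vt L R Sg k K)) : ℝ :=
  if (S ∩ EOuter Sg Eproj k K).Nonempty then 0 else ystar (S.biUnion Phi)

end Spanner

section Aux

open Spanner

lemma Phi_card_le_one {L R Sg : Type} [Fintype Sg] {k K : ℕ}
    (e : Spanner.Vt L R Sg k K × Spanner.Vt L R Sg k K) : (Spanner.Phi e).card ≤ 1 := by
  obtain ⟨a, b⟩ := e
  rcases a with ⟨i, σ⟩ | ⟨i, l⟩ | ⟨j, σ⟩ | ⟨j, l⟩ | ⟨i, j, σL, σR, t⟩ <;>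
    rcases b with ⟨i', σ'⟩ | ⟨i', l'⟩ | ⟨j', σ'⟩ | ⟨j', l'⟩ | ⟨i', j', σL', σR', t'⟩ <;>
    simp [Spanner.Phi]

lemma Phi_empty_of {L R Sg : Type} [Fintype Sg] {k K : ℕ}
    (a b : Spanner.Vt L R Sg k K)
    (ha : ∀ p : L × Fin (Spanner.numDup Sg k K), a ≠ Sum.inr (Sum.inl p))
    (hb : ∀ p : R × Fin (Spanner.numDup Sg k K),
      b ≠ Sum.inr (Sum.inr (Sum.inr (Sum.inl p)))) :
    Spanner.Phi (a, b) = ∅ := by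
  rcases a with ⟨i, σ⟩ | p | ⟨j, σ⟩ | p | ⟨i, j, σL, σR, t⟩ <;>
    rcases b with ⟨i', σ'⟩ | p' | ⟨j', σ'⟩ | p' | ⟨i', j', σL', σR', t'⟩ <;>
    first
      | rfl
      | exact absurd rfl (ha _)
      | exact absurd rfl (hb _)

end Aux
lemma mem_pathEdges {V : Type*} :
    ∀ (l : List V) (a b : V), (a, b) ∈ Spanner.pathEdges l →
      a ∈ l ∧ b ∈ l ∧ (l.Nodup → a ≠ b)
  | [], a, b, h => by simp [Spanner.pathEdges] at h
  | [x], a, b, h => by simp [Spanner.pathEdges] at h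
  | x :: y :: t, a, b, h => by
      have hpe : Spanner.pathEdges (x :: y :: t) = (x, y) :: Spanner.pathEdges (y :: t) := rfl
      rw [hpe, List.mem_cons] at h
      rcases h with h | h
      · obtain ⟨rfl, rfl⟩ := Prod.mk.injEq .. ▸ h
        refine ⟨by simp, by simp, fun hnd => ?_⟩
        rintro rfl
        exact (List.nodup_cons.1 hnd).1 (by simp)
      · obtain ⟨h1, h2, h3⟩ := mem_pathEdges (y :: t) a b h
        exact ⟨List.mem_cons_of_mem _ h1, List.mem_cons_of_mem _ h2,
          fun hnd => h3 (List.nodup_cons.1 hnd).2⟩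

lemma midVerts_shapes {L R Sg : Type} [Fintype Sg] {k K : ℕ} {i : L} {j : R} {σL σR : Sg} :
    ∀ v ∈ Spanner.midVerts (L := L) (R := R) k K i j σL σR,
      (∀ p : L × Fin (Spanner.numDup Sg k K), v ≠ Sum.inr (Sum.inl p)) ∧
      (∀ p : R × Fin (Spanner.numDup Sg k K),
        v ≠ Sum.inr (Sum.inr (Sum.inr (Sum.inl p)))) := by
  intro v hv
  simp only [Spanner.midVerts, List.mem_append, List.mem_cons, List.mem_map,
    List.mem_singleton, SpV.cLab, SpV.mid, SpV.xLab] at hv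
  rcases hv with (rfl | ⟨t, _, rfl⟩) | (rfl | h)
  · exact ⟨fun p => by simp, fun p => by simp⟩
  · exact ⟨fun p => by simp, fun p => by simp⟩
  · exact ⟨fun p => by simp, fun p => by simp⟩
  · exact absurd h List.not_mem_nil

lemma midVerts_nodup {L R Sg : Type} [Fintype Sg] {k K : ℕ} {i : L} {j : R} {σL σR : Sg} :
    (Spanner.midVerts (L := L) (R := R) k K i j σL σR).Nodup := by
  have hinj : Function.Injective fun t : Fin (2 * k - 4) =>
      (SpV.mid i j σL σR t : Spanner.Vt L R Sg k K) := by
    intro t t' h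
    simpa [SpV.mid] using h
  simp only [Spanner.midVerts, List.nodup_append, List.nodup_cons, List.mem_map,
    List.nodup_singleton, List.mem_cons, List.mem_append, List.mem_singleton,
    SpV.cLab, SpV.mid, SpV.xLab]
  refine ⟨⟨by simp, (List.nodup_finRange _).map hinj⟩, by simp, ?_⟩
  intro v hv
  rcases hv with rfl | hv
  · simp
  · obtain ⟨t, _, rfl⟩ := hv
    simp
lemma finset_biUnion_union {α β : Type*} [DecidableEq α] [DecidableEq β]
    (s t : Finset α) (f : α → Finset β) :
    (s ∪ t).biUnion f = s.biUnion f ∪ t.biUnion f := by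
  ext x; simp [Finset.mem_biUnion, Finset.mem_union, or_and_right, exists_or]

lemma card_biUnion_Phi_le {L R Sg : Type} [Fintype Sg]
    [DecidableEq L] [DecidableEq R] [DecidableEq Sg] {k K : ℕ}
    (S : Finset (Spanner.Vt L R Sg k K × Spanner.Vt L R Sg k K)) :
    (S.biUnion Spanner.Phi).card ≤ S.card := by
  calc (S.biUnion Spanner.Phi).card ≤ ∑ e ∈ S, (Spanner.Phi e).card :=
        Finset.card_biUnion_le
    _ ≤ ∑ e ∈ S, 1 := Finset.sum_le_sum fun e _ => Phi_card_le_one e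
    _ = S.card := by simp

lemma not_mem_EOuter_of {L R Sg : Type} [Fintype L] [Fintype R] [Fintype Sg]
    [DecidableEq L] [DecidableEq R] [DecidableEq Sg] {k K : ℕ}
    (Eproj : Finset (L × R)) (a b : Spanner.Vt L R Sg k K)
    (ha : ∀ p : L × Fin (Spanner.numDup Sg k K), a ≠ Sum.inr (Sum.inl p)) :
    (a, b) ∉ Spanner.EOuter Sg Eproj k K := by
  intro hmem
  simp only [Spanner.EOuter, Finset.mem_image, Finset.mem_product, SpV.cDup, SpV.xDup,
    Prod.mk.injEq] at hmem
  obtain ⟨p, _, h1, _⟩ := hmem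
  exact ha _ h1.symm

lemma psd_smul_real {n : Type*} [Fintype n] {M : Matrix n n ℝ} (hM : M.PosSemidef)
    {c : ℝ} (hc : 0 ≤ c) : (c • M).PosSemidef := by
  refine ⟨?_, fun x => ?_⟩
  · have : (c • M).conjTranspose = c • M := by
      rw [Matrix.conjTranspose_smul, hM.1]; simp
    exact this
  · exact (hM.smul hc).2 x

lemma psd_sum_real {n ι : Type*} [Fintype n] (s : Finset ι) (M : ι → Matrix n n ℝ)
    (h : ∀ i ∈ s, (M i).PosSemidef) : (∑ i ∈ s, M i).PosSemidef :=
  Finset.sum_induction M Matrix.PosSemidef (fun _ _ => Matrix.PosSemidef.add)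
    Matrix.PosSemidef.zero h

/-- Theorem `slack_ye=1`.  For the directed spanner instance `G = (V,E)`
built (with parameters `k ≥ 2`, `K ≥ 1`) from a projection games instance in which every left
vertex has degree exactly `K`, and the fractional solution `y'` built from a feasible solution
`y*` of `SDP_Proj^{r+2}`: for every edge `(u,v) ∈ E_LStars ∪ E_M ∪ E_RStars` and every
`z ∈ Z^{u,v}` (with respect to stretch `2k−1`), the slack moment matrix
`(∑_{e∈E} z e · y'_{I∪J∪{e}} − y'_{I∪J})_{I,J ⊆ E, |I|,|J| ≤ r}` is positive semidefinite. -/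
theorem directed_spanner_slack_psd_integral_edges
    {L R Sg : Type} [Fintype L] [Fintype R] [Fintype Sg]
    [DecidableEq L] [DecidableEq R] [DecidableEq Sg]
    (Eproj : Finset (L × R)) (π : L → R → Sg → Sg) (σ0 : Sg) (k K : ℕ)
    (hk : 2 ≤ k) (hK : 1 ≤ K)
    (hdeg : ∀ i : L, (Eproj.filter fun e => e.1 = i).card = K)
    (r : ℕ) (ystar : Finset ((L ⊕ R) × Sg) → ℝ)
    (hfeas : ProjFeasible (r + 2) ystar) :
    ∀ e ∈ Spanner.ELStars L R σ0 k K ∪ Spanner.EMedges Eproj π k K ∪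
        Spanner.ERStars L R σ0 k K,
      ∀ z : Spanner.Vt L R Sg k K × Spanner.Vt L R Sg k K → ℝ,
        InZ (Spanner.Edges Eproj π σ0 k K) (2 * k - 1) e.1 e.2 z →
        (slackMatrixE (Spanner.Edges Eproj π σ0 k K) r
          (Spanner.yPrime Eproj k K ystar) z).PosSemidef := by
  intro e he z hz
  obtain ⟨u, v⟩ := e
  obtain ⟨hy0, hpsd, hmarg⟩ := hfeas
  obtain ⟨B, hB⟩ : ∃ B : Matrix {S : Finset ((L ⊕ R) × Sg) // S.card ≤ r + 2}
      {S : Finset ((L ⊕ R) × Sg) // S.card ≤ r + 2} ℝ,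
      (Matrix.of fun Ψ₁ Ψ₂ : {S : Finset ((L ⊕ R) × Sg) // S.card ≤ r + 2} =>
        ystar (Ψ₁.1 ∪ Ψ₂.1)) = B.conjTranspose * B := by
    classical
    open scoped MatrixOrder in
    exact CStarAlgebra.nonneg_iff_eq_star_mul_self.mp hpsd.nonneg
  -- basic facts about the edge (u, v)
  have hfacts : (u, v) ∉ Spanner.EOuter Sg Eproj k K ∧
      Spanner.Phi (u, v) = ∅ ∧ u ≠ v := by
    rcases Finset.mem_union.1 he with he' | he'
    · rcases Finset.mem_union.1 he' with he'' | he''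
      · -- E_LStars
        simp only [Spanner.ELStars, Finset.mem_union, Finset.mem_image,
          Finset.mem_filter, Finset.mem_univ, true_and, SpV.cLab, Prod.mk.injEq] at he''
        rcases he'' with ⟨⟨i, σ⟩, hσ, h1, h2⟩ | ⟨⟨i, σ⟩, hσ, h1, h2⟩ <;>
          subst h1 <;> subst h2 <;>
          refine ⟨not_mem_EOuter_of _ _ _ (fun p => by simp),
            Phi_empty_of _ _ (fun p => by simp) (fun p => by simp), fun h => hσ ?_⟩ <;>
          simp only [Sum.inl.injEq, Prod.mk.injEq] at h <;>
          first
            | exact h.2.symm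
            | exact h.2
      · -- E_M
        simp only [Spanner.EMedges, Finset.mem_biUnion, List.mem_toFinset,
          Finset.mem_univ, true_and] at he''
        obtain ⟨⟨i, j⟩, _, σL, hm⟩ := he''
        obtain ⟨hu, hv, hnd⟩ := mem_pathEdges _ u v hm
        exact ⟨not_mem_EOuter_of _ _ _ (midVerts_shapes u hu).1,
          Phi_empty_of _ _ (midVerts_shapes u hu).1 (midVerts_shapes v hv).2,
          hnd midVerts_nodup⟩
    · -- E_RStars
      simp only [Spanner.ERStars, Finset.mem_union, Finset.mem_image,
        Finset.mem_filter, Finset.mem_univ, true_and, SpV.xLab, Prod.mk.injEq] at he'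
      rcases he' with ⟨⟨j, σ⟩, hσ, h1, h2⟩ | ⟨⟨j, σ⟩, hσ, h1, h2⟩ <;>
        subst h1 <;> subst h2 <;>
        refine ⟨not_mem_EOuter_of _ _ _ (fun p => by simp),
          Phi_empty_of _ _ (fun p => by simp) (fun p => by simp), fun h => hσ ?_⟩ <;>
        simp only [Sum.inr.injEq, Sum.inl.injEq, Prod.mk.injEq] at h <;>
        first
          | exact h.2.symm
          | exact h.2
  obtain ⟨hEOuv, hPhiuv, hne⟩ := hfacts
  have heE : (u, v) ∈ Spanner.Edges Eproj π σ0 k K := by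
    have hsub : Spanner.ELStars L R σ0 k K ∪ Spanner.EMedges Eproj π k K ∪
        Spanner.ERStars L R σ0 k K ⊆ Spanner.Edges Eproj π σ0 k K := by
      intro f hf
      simp only [Spanner.Edges, Finset.mem_union] at *
      tauto
    exact hsub he
  obtain ⟨hzb, hzp⟩ := hz
  have hz1 : z (u, v) = 1 := by
    refine le_antisymm (hzb _ heE).2 ?_
    have hpath : IsDirPath (Spanner.Edges Eproj π σ0 k K) u v [(u, v)] := by
      refine ⟨by simp, ?_, by simp, by simp, by exact List.isChain_singleton _, by simp [hne]⟩
      intro f hf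
      rw [List.mem_singleton] at hf
      subst hf
      exact heE
    have := hzp [(u, v)] hpath (by simp; omega)
    simpa using this
  -- Gram vectors
  have hMent : ∀ P Q : {S : Finset ((L ⊕ R) × Sg) // S.card ≤ r + 2},
      ystar (P.1 ∪ Q.1) = ∑ t, B t P * B t Q := by
    intro P Q
    have h1 : (Matrix.of fun Ψ₁ Ψ₂ : {S : Finset ((L ⊕ R) × Sg) // S.card ≤ r + 2} =>
        ystar (Ψ₁.1 ∪ Ψ₂.1)) P Q = (B.conjTranspose * B) P Q := by rw [hB]
    simpa [Matrix.mul_apply, Matrix.conjTranspose_apply] using h1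
  set EO := Spanner.EOuter Sg Eproj k K with hEOdef
  set W : Finset (Spanner.Vt L R Sg k K × Spanner.Vt L R Sg k K) →
      {S : Finset ((L ⊕ R) × Sg) // S.card ≤ r + 2} → ℝ :=
    fun S t => if (S ∩ EO).Nonempty then 0
      else if h : (S.biUnion Spanner.Phi).card ≤ r + 2 then B t ⟨_, h⟩ else 0 with hW
  have key : ∀ S T : Finset (Spanner.Vt L R Sg k K × Spanner.Vt L R Sg k K),
      S.card ≤ r + 2 → T.card ≤ r + 2 →
      Spanner.yPrime Eproj k K ystar (S ∪ T) = ∑ t, W S t * W T t := by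
    intro S T hS hT
    have hcS : (S.biUnion Spanner.Phi).card ≤ r + 2 := (card_biUnion_Phi_le S).trans hS
    have hcT : (T.biUnion Spanner.Phi).card ≤ r + 2 := (card_biUnion_Phi_le T).trans hT
    by_cases h1 : (S ∩ EO).Nonempty
    · have h2 : ((S ∪ T) ∩ EO).Nonempty :=
        h1.mono (Finset.inter_subset_inter Finset.subset_union_left le_rfl)
      simp [Spanner.yPrime, ← hEOdef, h2, hW, h1]
    · by_cases h3 : (T ∩ EO).Nonempty
      · have h2 : ((S ∪ T) ∩ EO).Nonempty :=
          h3.mono (Finset.inter_subset_inter Finset.subset_union_right le_rfl)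
        simp [Spanner.yPrime, ← hEOdef, h2, hW, h3]
      · have h2 : ¬((S ∪ T) ∩ EO).Nonempty := by
          rw [Finset.union_inter_distrib_right,
            Finset.not_nonempty_iff_eq_empty.1 h1,
            Finset.not_nonempty_iff_eq_empty.1 h3]
          simp
        have h4 : Spanner.yPrime Eproj k K ystar (S ∪ T) =
            ystar ((S.biUnion Spanner.Phi) ∪ (T.biUnion Spanner.Phi)) := by
          rw [Spanner.yPrime, ← hEOdef, if_neg h2, finset_biUnion_union]
        rw [h4, hMent ⟨_, hcS⟩ ⟨_, hcT⟩]
        simp [hW, h1, h3, hcS, hcT]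
  have hIns : ∀ S, Spanner.yPrime Eproj k K ystar (insert (u, v) S) =
      Spanner.yPrime Eproj k K ystar S := by
    intro S
    rw [Spanner.yPrime, Spanner.yPrime,
      Finset.insert_inter_of_notMem hEOuv, Finset.biUnion_insert, hPhiuv,
      Finset.empty_union]
  -- the matrix identity
  have hmat : slackMatrixE (Spanner.Edges Eproj π σ0 k K) r
        (Spanner.yPrime Eproj k K ystar) z =
      ∑ f ∈ (Spanner.Edges Eproj π σ0 k K).erase (u, v), z f •
        ((Matrix.of fun (t : {S : Finset ((L ⊕ R) × Sg) // S.card ≤ r + 2})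
            (I : {S // S ⊆ Spanner.Edges Eproj π σ0 k K ∧ S.card ≤ r}) =>
              W (insert f I.1) t).conjTranspose *
          Matrix.of fun t I => W (insert f I.1) t) := by
    ext I J
    have hterm : ∀ f, Spanner.yPrime Eproj k K ystar (insert f (I.1 ∪ J.1)) =
        ∑ t, W (insert f I.1) t * W (insert f J.1) t := by
      intro f
      have hu : insert f I.1 ∪ insert f J.1 = insert f (I.1 ∪ J.1) := by
        rw [Finset.insert_union, Finset.union_insert, Finset.insert_idem]
      rw [← hu]
      exact key _ _ ((Finset.card_insert_le _ _).trans (by omega))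
        ((Finset.card_insert_le _ _).trans (by omega))
    have hRHS : (∑ f ∈ (Spanner.Edges Eproj π σ0 k K).erase (u, v), z f •
        ((Matrix.of fun (t : {S : Finset ((L ⊕ R) × Sg) // S.card ≤ r + 2})
            (I : {S // S ⊆ Spanner.Edges Eproj π σ0 k K ∧ S.card ≤ r}) =>
              W (insert f I.1) t).conjTranspose *
          Matrix.of fun t I => W (insert f I.1) t)) I J =
        ∑ f ∈ (Spanner.Edges Eproj π σ0 k K).erase (u, v), z f *
          Spanner.yPrime Eproj k K ystar (insert f (I.1 ∪ J.1)) := by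
      rw [Matrix.sum_apply]
      refine Finset.sum_congr rfl fun f _ => ?_
      rw [Matrix.smul_apply, hterm f]
      simp [Matrix.mul_apply, Matrix.conjTranspose_apply]
    rw [hRHS]
    show (∑ f ∈ Spanner.Edges Eproj π σ0 k K, z f *
        Spanner.yPrime Eproj k K ystar (insert f (I.1 ∪ J.1))) -
        Spanner.yPrime Eproj k K ystar (I.1 ∪ J.1) = _
    rw [← Finset.add_sum_erase _ _ heE, hz1, one_mul, hIns]
    ring
  rw [hmat]
  exact psd_sum_real _ _ fun f hf =>
    psd_smul_real (Matrix.posSemidef_conjTranspose_mul_self _)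
      (hzb f (Finset.mem_of_mem_erase hf)).1
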